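/- Let X be a Banach space over ℝ, and let (Z_n)_{n=1}^∞ and (X_n)_{n=1}^∞ be sequences of subspaces of X with Z_n ⊆ X_n ⊆ Z_{n+1} for all n. Let R_n : X → X be continuous linear projections with range Z_n satisfying R_i R_j = R_{min(i,j)} for all i, j, and let Q_n : X → X be continuous linear projections with range X_n. Define P_n := R_n + (I − R_n) Q_n (R_{n+1} − R_n). Then each P_n is a continuous linear projection of X onto X_n (i.e., P_n ∘ P_n = P_n, the range of P_n is X_n, and P_n x = x for x ∈ X_n), and P_n P_{n+1} = P_n for every n. Moreover, if sup_n ‖R_n‖ < ∞ and sup_n ‖Q_n‖ < ∞ then sup_n ‖P_n‖ < ∞. -/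

import Mathlib

open Filter Topology

theorem projections_onto_intermediate_subspaces
    (X : Type*) [NormedAddCommGroup X] [NormedSpace ℝ X] [CompleteSpace X]
    (Z W : ℕ → Submodule ℝ X)
    (hZW : ∀ n, Z n ≤ W n) (hWZ : ∀ n, W n ≤ Z (n + 1))
    (R : ℕ → X →L[ℝ] X)
    (hRrange : ∀ n, LinearMap.range (R n : X →ₗ[ℝ] X) = Z n)
    (hRcomm : ∀ i j, (R i).comp (R j) = R (min i j))
    (Q : ℕ → X →L[ℝ] X)
    (hQproj : ∀ n, (Q n).comp (Q n) = Q n)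
    (hQrange : ∀ n, LinearMap.range (Q n : X →ₗ[ℝ] X) = W n)
    (P : ℕ → X →L[ℝ] X)
    (hP : ∀ n, P n = R n + ((1 : X →L[ℝ] X) - R n) * Q n * (R (n + 1) - R n)) :
    (∀ n, (P n).comp (P n) = P n) ∧
    (∀ n, LinearMap.range (P n : X →ₗ[ℝ] X) = W n) ∧
    (∀ n, ∀ x ∈ W n, P n x = x) ∧
    (∀ n, (P n).comp (P (n + 1)) = P n) ∧
    (∀ CR CQ : ℝ, (∀ n, ‖R n‖ ≤ CR) → (∀ n, ‖Q n‖ ≤ CQ) →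
      ∃ C : ℝ, ∀ n, ‖P n‖ ≤ C) := by
  -- basic facts
  have hRmem : ∀ n x, R n x ∈ Z n := by
    intro n x
    rw [← hRrange n]
    exact ⟨x, rfl⟩
  have hQmem : ∀ n x, Q n x ∈ W n := by
    intro n x
    rw [← hQrange n]
    exact ⟨x, rfl⟩
  have hRfix : ∀ n, ∀ x ∈ Z n, R n x = x := by
    intro n x hx
    rw [← hRrange n] at hx
    obtain ⟨y, rfl⟩ := hx
    have h := hRcomm n n
    rw [min_self] at h
    calc R n (R n y) = ((R n).comp (R n)) y := rfl
      _ = R n y := by rw [h]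
  have hQfix : ∀ n, ∀ x ∈ W n, Q n x = x := by
    intro n x hx
    rw [← hQrange n] at hx
    obtain ⟨y, rfl⟩ := hx
    calc Q n (Q n y) = ((Q n).comp (Q n)) y := rfl
      _ = Q n y := by rw [hQproj n]
  have hPapply : ∀ n x, P n x = R n x
      + (Q n (R (n + 1) x - R n x) - R n (Q n (R (n + 1) x - R n x))) := by
    intro n x
    rw [hP n]
    simp [ContinuousLinearMap.add_apply, ContinuousLinearMap.mul_apply,
      ContinuousLinearMap.sub_apply, ContinuousLinearMap.one_apply]
  have hPmem : ∀ n x, P n x ∈ W n := by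
    intro n x
    rw [hPapply n x]
    exact add_mem (hZW n (hRmem n x))
      (sub_mem (hQmem n _) (hZW n (hRmem n _)))
  have hPfix : ∀ n, ∀ x ∈ W n, P n x = x := by
    intro n x hx
    rw [hPapply n x, hRfix (n + 1) x (hWZ n hx)]
    have h2 : Q n (x - R n x) = x - R n x :=
      hQfix n _ (sub_mem hx (hZW n (hRmem n x)))
    rw [h2, map_sub, hRfix n (R n x) (hRmem n x)]
    abel
  have hPP : ∀ n, (P n).comp (P n) = P n := by
    intro n
    ext x
    exact hPfix n (P n x) (hPmem n x)
  refine ⟨hPP, ?_, hPfix, ?_, ?_⟩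
  · intro n
    apply le_antisymm
    · rintro _ ⟨y, rfl⟩
      exact hPmem n y
    · intro x hx
      exact ⟨x, hPfix n x hx⟩
  · -- P n ∘ P (n+1) = P n
    intro n
    have hab : R n * R (n + 1) = R n := by
      have h := hRcomm n (n + 1)
      rwa [min_eq_left (Nat.le_succ n)] at h
    have hbb : R (n + 1) * R (n + 1) = R (n + 1) := by
      have h := hRcomm (n + 1) (n + 1)
      rwa [min_self] at h
    have key1 : P n * R (n + 1) = P n := by
      have h : (R (n + 1) - R n) * R (n + 1) = R (n + 1) - R n := by
        rw [sub_mul, hbb, hab]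
      rw [hP n, add_mul, mul_assoc, h, hab]
    have key2 : R (n + 1) * P (n + 1) = R (n + 1) := by
      rw [hP (n + 1), mul_add, ← mul_assoc, ← mul_assoc, mul_one_sub, hbb,
        sub_self, zero_mul, zero_mul, add_zero]
    have : P n * P (n + 1) = P n := by
      calc P n * P (n + 1) = P n * R (n + 1) * P (n + 1) := by rw [key1]
        _ = P n * (R (n + 1) * P (n + 1)) := by rw [mul_assoc]
        _ = P n * R (n + 1) := by rw [key2]
        _ = P n := key1
    exact this
  · intro CR CQ hCR hCQ
    have hCR0 : 0 ≤ CR := le_trans (norm_nonneg _) (hCR 0)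
    have hCQ0 : 0 ≤ CQ := le_trans (norm_nonneg _) (hCQ 0)
    refine ⟨CR + (1 + CR) * CQ * (CR + CR), fun n => ?_⟩
    rw [hP n]
    calc ‖R n + (1 - R n) * Q n * (R (n + 1) - R n)‖
        ≤ ‖R n‖ + ‖(1 - R n) * Q n * (R (n + 1) - R n)‖ := norm_add_le _ _
      _ ≤ ‖R n‖ + ‖(1 - R n) * Q n‖ * ‖R (n + 1) - R n‖ := by
          gcongr; exact norm_mul_le _ _
      _ ≤ ‖R n‖ + ‖(1 : X →L[ℝ] X) - R n‖ * ‖Q n‖ * ‖R (n + 1) - R n‖ := by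
          gcongr; exact norm_mul_le _ _
      _ ≤ CR + (1 + CR) * CQ * (CR + CR) := by
          gcongr
          · exact hCR n
          · calc ‖(1 : X →L[ℝ] X) - R n‖ ≤ ‖(1 : X →L[ℝ] X)‖ + ‖R n‖ := norm_sub_le _ _
              _ ≤ 1 + CR := by
                  gcongr
                  · exact ContinuousLinearMap.norm_id_le
                  · exact hCR n
          · exact hCQ n
          · calc ‖R (n + 1) - R n‖ ≤ ‖R (n + 1)‖ + ‖R n‖ := norm_sub_le _ _
              _ ≤ CR + CR := add_le_add (hCR (n + 1)) (hCR n)
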